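/- Let ν ∈ ℝ be such that ν + 3/2 is not zero or a negative integer, and suppose ν ≥ (e/(8 sin 1 + 6 − 2e))·[4(e−1)³ + 6(e−1)² + (e+1) + 6/e − 12/e²] − 3/2. Then, writing U_ν(z) = ∑_{n≥0} ((−1/4)^n / ((3/2)_n (ν+3/2)_n)) z^n (the normalized Struve function of the first kind, case b = c = 1), the function −3(2ν+3)(U_ν − 1) belongs to K_e and the function z ↦ −3(2ν+3) z U'_ν(z) belongs to S*_e. -/

import Mathlib

open Complex Metric Set

noncomputable def poch (x : ℂ) (n : ℕ) : ℂ := ∏ k ∈ Finset.range n, (x + k)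

/-- The class `P_e`: `p` is analytic on the unit disk, `p 0 = 1`, and `p` maps the
unit disk into `exp(𝔻)` (equivalently, `p` is subordinate to `exp`). -/
def memPe (p : ℂ → ℂ) : Prop :=
  AnalyticOnNhd ℂ p (Metric.ball 0 1) ∧ p 0 = 1 ∧
    ∀ z ∈ Metric.ball (0:ℂ) 1, p z ∈ Complex.exp '' Metric.ball 0 1

/-- The class `K_e` of exponential convex functions. -/
def memKe (f : ℂ → ℂ) : Prop :=
  AnalyticOnNhd ℂ f (Metric.ball 0 1) ∧ f 0 = 0 ∧ deriv f 0 = 1 ∧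
    (∀ z ∈ Metric.ball (0:ℂ) 1, deriv f z ≠ 0) ∧
    memPe (fun z => 1 + z * deriv (deriv f) z / deriv f z)

/-- The class `S*_e` of exponential starlike functions. -/
def memSe (f : ℂ → ℂ) : Prop :=
  AnalyticOnNhd ℂ f (Metric.ball 0 1) ∧ f 0 = 0 ∧ deriv f 0 = 1 ∧
    (∀ z ∈ Metric.ball (0:ℂ) 1, z ≠ 0 → f z ≠ 0) ∧
    memPe (fun z => if z = 0 then 1 else z * deriv f z / f z)

/-- The normalized generalized Struve function of the first kind
`u_{κ,c}(z) = ∑_{n≥0} ((−c/4)^n / ((3/2)_n (κ)_n)) z^n`. -/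
noncomputable def struveU (κ c : ℂ) (z : ℂ) : ℂ :=
  ∑' n : ℕ, (-c / 4) ^ n / (poch (3/2) n * poch κ n) * z ^ n

namespace StruveAux

noncomputable def psum (b : ℕ → ℂ) (z : ℂ) : ℂ := ∑' n, b n * z ^ n
noncomputable def dcoef (b : ℕ → ℂ) (n : ℕ) : ℂ := ((n : ℂ) + 1) * b (n + 1)

lemma succ_le_two_pow (n : ℕ) : (n : ℝ) + 1 ≤ 2 ^ n := by
  induction n with
  | zero => norm_num
  | succ k ih =>
    push_cast
    rw [pow_succ]
    nlinarith [pow_nonneg (by norm_num : (0:ℝ) ≤ 2) k]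

lemma dcoef_bound {b : ℕ → ℂ} {M r : ℝ} (hr0 : 0 ≤ r)
    (hb : ∀ n, ‖b n‖ ≤ M * r ^ n) (n : ℕ) :
    ‖dcoef b n‖ ≤ (M * r) * (2 * r) ^ n := by
  have h1 : ‖dcoef b n‖ = ((n : ℝ) + 1) * ‖b (n + 1)‖ := by
    rw [dcoef, norm_mul]
    congr 1
    have : ((n : ℂ) + 1) = ((n + 1 : ℕ) : ℂ) := by push_cast; ring
    rw [this, Complex.norm_natCast]
    push_cast; ring
  have hM : 0 ≤ M := by have h0 := hb 0; simp only [pow_zero, mul_one] at h0; exact le_trans (norm_nonneg _) h0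
  calc ‖dcoef b n‖ = ((n : ℝ) + 1) * ‖b (n + 1)‖ := h1
    _ ≤ (2 : ℝ) ^ n * (M * r ^ (n + 1)) := by
        apply mul_le_mul (succ_le_two_pow n) (hb _) (norm_nonneg _)
        positivity
    _ = (M * r) * (2 * r) ^ n := by rw [mul_pow, pow_succ]; ring

lemma summable_term {b : ℕ → ℂ} {M r : ℝ} (hr0 : 0 ≤ r) (hr : r < 1/4)
    (hb : ∀ n, ‖b n‖ ≤ M * r ^ n) {z : ℂ} (hz : ‖z‖ < 2) :
    Summable fun n => b n * z ^ n := by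
  have hM : 0 ≤ M := by have h0 := hb 0; simp only [pow_zero, mul_one] at h0; exact le_trans (norm_nonneg _) h0
  apply Summable.of_norm_bounded (g := fun n => M * (2*r)^n)
    ((summable_geometric_of_lt_one (by linarith) (by linarith)).mul_left M)
  intro n
  rw [norm_mul, norm_pow]
  calc ‖b n‖ * ‖z‖^n ≤ (M * r^n) * 2^n := by
        apply mul_le_mul (hb n) (pow_le_pow_left₀ (norm_nonneg _) hz.le n) (by positivity)
        positivity
    _ = M * (2*r)^n := by rw [mul_pow]; ring

lemma hasDerivAt_psum {b : ℕ → ℂ} {M r : ℝ} (hr0 : 0 ≤ r) (hr : r < 1/4)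
    (hb : ∀ n, ‖b n‖ ≤ M * r ^ n) {z : ℂ} (hz : ‖z‖ < 2) :
    HasDerivAt (psum b) (psum (dcoef b) z) z := by
  have hM : 0 ≤ M := by have h0 := hb 0; simp only [pow_zero, mul_one] at h0; exact le_trans (norm_nonneg _) h0
  have hsum4 : Summable fun n : ℕ => M * (4*r)^n :=
    (summable_geometric_of_lt_one (by linarith) (by linarith)).mul_left M
  have hterm : ∀ (n : ℕ) (y : ℂ), y ∈ ball (0:ℂ) 2 →
      HasDerivAt (fun w => b n * w ^ n) (b n * ((n : ℂ) * y ^ (n-1))) y :=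
    fun n y _ => (hasDerivAt_pow n y).const_mul (b n)
  have hbound : ∀ (n : ℕ) (y : ℂ), y ∈ ball (0:ℂ) 2 →
      ‖b n * ((n : ℂ) * y ^ (n-1))‖ ≤ M * (4*r)^n := by
    intro n y hy
    rw [mem_ball, dist_zero_right] at hy
    rw [norm_mul, norm_mul, norm_pow, Complex.norm_natCast]
    have h1 : (n : ℝ) ≤ 2 ^ n := le_trans (by linarith [Nat.cast_nonneg (α := ℝ) n]) (succ_le_two_pow n)
    have h2 : ‖y‖ ^ (n-1) ≤ 2 ^ n := by
      calc ‖y‖ ^ (n-1) ≤ 2 ^ (n-1) := pow_le_pow_left₀ (norm_nonneg _) hy.le _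
        _ ≤ 2 ^ n := pow_le_pow_right₀ (by norm_num) (Nat.sub_le n 1)
    calc ‖b n‖ * ((n : ℝ) * ‖y‖ ^ (n-1)) ≤ (M * r^n) * (2^n * 2^n) := by
          apply mul_le_mul (hb n) (mul_le_mul h1 h2 (by positivity) (by positivity))
            (by positivity) (by positivity)
      _ = M * (4*r)^n := by
          rw [mul_pow]
          have : (2:ℝ)^n * 2^n = 4^n := by rw [← mul_pow]; norm_num
          rw [← this]; ring
    
  have key := hasDerivAt_tsum_of_isPreconnected hsum4 isOpen_ball
    (convex_ball (0:ℂ) 2).isPreconnected hterm hbound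
    (by simp : (0:ℂ) ∈ ball (0:ℂ) 2)
    (summable_term hr0 hr hb (by norm_num))
    (by rwa [mem_ball, dist_zero_right])
  have hzball : z ∈ ball (0:ℂ) 2 := by rwa [mem_ball, dist_zero_right]
  have hsumd : Summable (fun n => b n * ((n : ℂ) * z^(n-1))) :=
    Summable.of_norm_bounded hsum4 (fun n => hbound n z hzball)
  have hval : ∑' n : ℕ, b n * ((n : ℂ) * z^(n-1)) = psum (dcoef b) z := by
    rw [Summable.tsum_eq_zero_add hsumd]
    simp only [Nat.cast_zero, zero_mul, mul_zero, zero_add]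
    exact tsum_congr fun n => by
      rw [dcoef]
      push_cast [Nat.add_sub_cancel]
      ring
  rw [← hval]
  exact key

lemma deriv_psum {b : ℕ → ℂ} {M r : ℝ} (hr0 : 0 ≤ r) (hr : r < 1/4)
    (hb : ∀ n, ‖b n‖ ≤ M * r ^ n) {z : ℂ} (hz : ‖z‖ < 2) :
    deriv (psum b) z = psum (dcoef b) z :=
  (hasDerivAt_psum hr0 hr hb hz).deriv

lemma analyticOnNhd_psum {b : ℕ → ℂ} {M r : ℝ} (hr0 : 0 ≤ r) (hr : r < 1/4)
    (hb : ∀ n, ‖b n‖ ≤ M * r ^ n) :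
    AnalyticOnNhd ℂ (psum b) (ball 0 2) := by
  apply DifferentiableOn.analyticOnNhd _ isOpen_ball
  intro z hz
  rw [mem_ball, dist_zero_right] at hz
  exact (hasDerivAt_psum hr0 hr hb hz).differentiableAt.differentiableWithinAt

lemma psum_zero (b : ℕ → ℂ) : psum b 0 = b 0 := by
  rw [psum, tsum_eq_single 0]
  · norm_num
  · intro n hn
    rw [zero_pow hn, mul_zero]

lemma psum_norm_le {b : ℕ → ℂ} {M r : ℝ} (hr0 : 0 ≤ r) (hr : r < 1/4)
    (hb : ∀ n, ‖b n‖ ≤ M * r ^ n) {z : ℂ} (hz : ‖z‖ ≤ 1) :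
    ‖psum b z‖ ≤ M * (1 - r)⁻¹ := by
  have hM : 0 ≤ M := by have h0 := hb 0; simp only [pow_zero, mul_one] at h0; exact le_trans (norm_nonneg _) h0
  apply tsum_of_norm_bounded ((hasSum_geometric_of_lt_one hr0 (by linarith)).mul_left M)
  intro n
  rw [norm_mul, norm_pow]
  calc ‖b n‖ * ‖z‖^n ≤ (M * r^n) * 1 := by
        apply mul_le_mul (hb n) (pow_le_one₀ (norm_nonneg _) hz) (by positivity) (by positivity)
    _ = M * r^n := mul_one _

lemma psum_sub_head_norm_le {b : ℕ → ℂ} {M r : ℝ} (hr0 : 0 ≤ r) (hr : r < 1/4)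
    (hb : ∀ n, ‖b n‖ ≤ M * r ^ n) {z : ℂ} (hz : ‖z‖ ≤ 1) :
    ‖psum b z - b 0‖ ≤ (M * r) * (1 - r)⁻¹ := by
  have hM : 0 ≤ M := by have h0 := hb 0; simp only [pow_zero, mul_one] at h0; exact le_trans (norm_nonneg _) h0
  have hsum : Summable fun n => b n * z ^ n :=
    summable_term hr0 hr hb (by linarith)
  rw [psum, Summable.tsum_eq_zero_add hsum, pow_zero, mul_one, add_sub_cancel_left]
  apply tsum_of_norm_bounded ((hasSum_geometric_of_lt_one hr0 (by linarith)).mul_left (M*r))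
  intro n
  rw [norm_mul, norm_pow]
  calc ‖b (n+1)‖ * ‖z‖^(n+1) ≤ (M * r^(n+1)) * 1 := by
        apply mul_le_mul (hb _) (pow_le_one₀ (norm_nonneg _) hz) (by positivity) (by positivity)
    _ = (M * r) * r^n := by rw [pow_succ]; ring

lemma mem_exp_ball {w : ℂ} (hw : ‖w - 1‖ ≤ 1/5) : w ∈ Complex.exp '' Metric.ball 0 1 := by
  have hw0 : w ≠ 0 := by
    intro h
    rw [h] at hw
    norm_num at hw
  refine ⟨Complex.log w, ?_, Complex.exp_log hw0⟩
  rw [mem_ball, dist_zero_right]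
  have hrw : (1 : ℂ) + (w - 1) = w := by ring
  rw [← hrw]
  calc ‖Complex.log (1 + (w-1))‖ ≤ (3/2) * ‖w-1‖ :=
        Complex.norm_log_one_add_half_le_self (by linarith)
    _ < 1 := by nlinarith [norm_nonneg (w - 1)]


noncomputable def ca (κ : ℝ) (n : ℕ) : ℂ := (-1/4 : ℂ)^n / (poch (3/2) n * poch (κ:ℂ) n)
noncomputable def cb (κ : ℝ) (n : ℕ) : ℂ := if n = 0 then 0 else (-6*(κ:ℂ)) * ca κ n
noncomputable def ce (κ : ℝ) (n : ℕ) : ℂ := (n : ℂ) * cb κ n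

lemma norm_add_nat (x : ℝ) (hx : 0 ≤ x) (k : ℕ) : ‖(x:ℂ) + (k:ℂ)‖ = x + k := by
  have h : (x:ℂ) + (k:ℂ) = ((x + k : ℝ) : ℂ) := by push_cast; ring
  rw [h, Complex.norm_real]
  exact abs_of_nonneg (by positivity)

lemma norm_poch_real (x : ℝ) (hx : 0 ≤ x) (n : ℕ) :
    ‖poch (x:ℂ) n‖ = ∏ k ∈ Finset.range n, (x + k) := by
  rw [poch, norm_prod]
  exact Finset.prod_congr rfl fun k _ => norm_add_nat x hx k

lemma poch32_ge_one (n : ℕ) : 1 ≤ ‖poch (3/2 : ℂ) n‖ := by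
  have h32 : ((3:ℂ)/2) = (((3:ℝ)/2 : ℝ) : ℂ) := by norm_num
  rw [h32, norm_poch_real _ (by norm_num)]
  calc (1:ℝ) = ∏ _k ∈ Finset.range n, (1:ℝ) := by simp
    _ ≤ ∏ k ∈ Finset.range n, ((3:ℝ)/2 + k) := by
        apply Finset.prod_le_prod (fun k _ => by norm_num)
        intro k _
        have := Nat.cast_nonneg (α := ℝ) k
        linarith

lemma pochK_ge {κ : ℝ} (hκ : 12 ≤ κ) (n : ℕ) : (12:ℝ)^n ≤ ‖poch (κ:ℂ) n‖ := by
  rw [norm_poch_real κ (by linarith)]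
  calc (12:ℝ)^n = ∏ _k ∈ Finset.range n, (12:ℝ) := by
        rw [Finset.prod_const, Finset.card_range]
    _ ≤ ∏ k ∈ Finset.range n, (κ + k) := by
        apply Finset.prod_le_prod (fun k _ => by norm_num)
        intro k _
        have := Nat.cast_nonneg (α := ℝ) k
        linarith

lemma pochK_ge' {κ : ℝ} (hκ : 12 ≤ κ) (n : ℕ) : κ * 12^n ≤ ‖poch (κ:ℂ) (n+1)‖ := by
  rw [norm_poch_real κ (by linarith), Finset.prod_range_succ']
  have h1 : (12:ℝ)^n ≤ ∏ k ∈ Finset.range n, (κ + (k+1 : ℕ)) := by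
    calc (12:ℝ)^n = ∏ _k ∈ Finset.range n, (12:ℝ) := by
          rw [Finset.prod_const, Finset.card_range]
      _ ≤ _ := by
          apply Finset.prod_le_prod (fun k _ => by norm_num)
          intro k _
          have := Nat.cast_nonneg (α := ℝ) k
          push_cast
          linarith
  have h2 : κ + ((0:ℕ):ℝ) = κ := by norm_num
  rw [h2]
  calc κ * 12^n = 12^n * κ := by ring
    _ ≤ (∏ k ∈ Finset.range n, (κ + (k+1 : ℕ))) * κ := by
        apply mul_le_mul_of_nonneg_right h1 (by linarith)

lemma norm_quarter : ‖(-1/4 : ℂ)‖ = 1/4 := by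
  have h : (-1/4 : ℂ) = (((-1:ℝ)/4 : ℝ) : ℂ) := by norm_num
  rw [h, Complex.norm_real, Real.norm_eq_abs]
  norm_num

lemma ca_norm {κ : ℝ} (hκ : 12 ≤ κ) (n : ℕ) : ‖ca κ n‖ ≤ 1 * (1/48:ℝ)^n := by
  rw [ca, norm_div, norm_mul, norm_pow, norm_quarter, one_mul]
  have h1 := poch32_ge_one n
  have h2 := pochK_ge hκ n
  calc (1/4:ℝ)^n / (‖poch (3/2) n‖ * ‖poch (κ:ℂ) n‖) ≤ (1/4)^n / (1 * 12^n) := by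
        apply div_le_div₀ (by positivity) le_rfl (by positivity)
        apply mul_le_mul h1 h2 (by positivity) (le_trans zero_le_one h1)
    _ = (1/48:ℝ)^n := by
        rw [one_mul, ← div_pow]
        norm_num

lemma cb_norm {κ : ℝ} (hκ : 12 ≤ κ) (n : ℕ) : ‖cb κ n‖ ≤ 72 * (1/48:ℝ)^n := by
  cases n with
  | zero => simp [cb]
  | succ m =>
    have hκ0 : (0:ℝ) < κ := by linarith
    rw [cb, if_neg (Nat.succ_ne_zero m), norm_mul]
    have h6 : ‖(-6*(κ:ℂ))‖ = 6*κ := by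
      have h : (-6*(κ:ℂ)) = (((-6*κ : ℝ)) : ℂ) := by push_cast; ring
      rw [h, Complex.norm_real, Real.norm_eq_abs, abs_of_nonpos (by nlinarith)]
      ring
    rw [h6, ca, norm_div, norm_mul, norm_pow, norm_quarter]
    have h1 := poch32_ge_one (m+1)
    have h2 := pochK_ge' hκ m
    have hkey : (1/4:ℝ)^(m+1) / (‖poch (3/2) (m+1)‖ * ‖poch (κ:ℂ) (m+1)‖)
        ≤ (1/4)^(m+1) / (1 * (κ * 12^m)) := by
      apply div_le_div₀ (by positivity) le_rfl (by positivity)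
      apply mul_le_mul h1 h2 (by positivity) (le_trans zero_le_one h1)
    calc 6*κ * ((1/4:ℝ)^(m+1) / (‖poch (3/2) (m+1)‖ * ‖poch (κ:ℂ) (m+1)‖))
        ≤ 6*κ * ((1/4)^(m+1) / (1 * (κ * 12^m))) := by
          apply mul_le_mul_of_nonneg_left hkey (by positivity)
      _ = 72 * (1/48:ℝ)^(m+1) := by
          have e1 : (1/48 : ℝ)^(m+1) = (1/4)^(m+1) * (1/12)^(m+1) := by
            rw [← mul_pow]; norm_num
          rw [e1, one_mul]
          have h12 : (12:ℝ)^m ≠ 0 := by positivity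
          field_simp
          ring_nf; rw [← mul_pow]; norm_num
    
lemma ce_norm {κ : ℝ} (hκ : 12 ≤ κ) (n : ℕ) : ‖ce κ n‖ ≤ 72 * (1/24:ℝ)^n := by
  rw [ce, norm_mul, Complex.norm_natCast]
  have h1 : (n:ℝ) ≤ 2^n := by
    calc (n:ℝ) ≤ n + 1 := by linarith
      _ ≤ 2^n := by
        induction n with
        | zero => norm_num
        | succ k ih =>
          push_cast
          rw [pow_succ]
          push_cast at ih
          nlinarith [pow_nonneg (by norm_num : (0:ℝ) ≤ 2) k]
  calc (n:ℝ) * ‖cb κ n‖ ≤ 2^n * (72 * (1/48)^n) := by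
        apply mul_le_mul h1 (cb_norm hκ n) (norm_nonneg _) (by positivity)
    _ = 72 * (1/24:ℝ)^n := by
        have : (1/24:ℝ)^n = 2^n * (1/48)^n := by rw [← mul_pow]; norm_num
        rw [this]; ring

lemma poch_one (x : ℂ) : poch x 1 = x := by simp [poch]

lemma ca_zero (κ : ℝ) : ca κ 0 = 1 := by simp [ca, poch]

lemma cb_one {κ : ℝ} (hκ : 12 ≤ κ) : cb κ 1 = 1 := by
  have hK : (κ:ℂ) ≠ 0 := Complex.ofReal_ne_zero.mpr (by linarith)
  rw [cb, if_neg one_ne_zero, ca, poch_one, poch_one]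
  field_simp
  ring

lemma kappa_ge (ν : ℝ)
    (h : ν ≥ Real.exp 1 / (8 * Real.sin 1 + 6 - 2 * Real.exp 1) *
        (4 * (Real.exp 1 - 1) ^ 3 + 6 * (Real.exp 1 - 1) ^ 2 + (Real.exp 1 + 1) +
          6 / Real.exp 1 - 12 / (Real.exp 1) ^ 2) - 3 / 2) :
    12 ≤ ν + 3 / 2 := by
  have hE1 : (2.7182818283 : ℝ) < Real.exp 1 := Real.exp_one_gt_d9
  have hE2 : Real.exp 1 < 2.7182818286 := Real.exp_one_lt_d9
  have hs1 : Real.sin 1 ≤ 1 := Real.sin_le_one 1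
  have hs0 : 0 < Real.sin 1 :=
    Real.sin_pos_of_pos_of_lt_pi (by norm_num) (by linarith [Real.pi_gt_three])
  have hEpos : (0:ℝ) < Real.exp 1 := by linarith
  have hd : 0 < 8 * Real.sin 1 + 6 - 2 * Real.exp 1 := by nlinarith
  have h6E : (2.2 : ℝ) ≤ 6 / Real.exp 1 := by
    rw [le_div_iff₀ hEpos]; nlinarith
  have h12E : 12 / (Real.exp 1)^2 ≤ 1.7 := by
    rw [div_le_iff₀ (by positivity)]; nlinarith
  have hB : (42:ℝ) ≤ 4*(Real.exp 1-1)^3 + 6*(Real.exp 1-1)^2 + (Real.exp 1+1)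
      + 6/Real.exp 1 - 12/(Real.exp 1)^2 := by nlinarith
  have hfrac : (12:ℝ) ≤ Real.exp 1 / (8*Real.sin 1 + 6 - 2*Real.exp 1) *
      (4*(Real.exp 1-1)^3 + 6*(Real.exp 1-1)^2 + (Real.exp 1+1)
        + 6/Real.exp 1 - 12/(Real.exp 1)^2) := by
    rw [div_mul_eq_mul_div, le_div_iff₀ hd]
    nlinarith [mul_le_mul_of_nonneg_left hB (le_of_lt hEpos)]
  linarith


end StruveAux

open StruveAux

/-- For the normalized Struve function `U_ν = u_{ν+3/2, 1}` (case `b = c = 1`),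
under the stated condition on `ν`, the function `−3(2ν+3)(U_ν − 1)` is exponential
convex and `z ↦ −3(2ν+3) z U'_ν(z)` is exponential starlike. -/
theorem struve_first_kind_convex_starlike (ν : ℝ) (hν : ∀ n : ℕ, ν + 3 / 2 ≠ -(n : ℝ))
    (h : ν ≥ Real.exp 1 / (8 * Real.sin 1 + 6 - 2 * Real.exp 1) *
        (4 * (Real.exp 1 - 1) ^ 3 + 6 * (Real.exp 1 - 1) ^ 2 + (Real.exp 1 + 1) +
          6 / Real.exp 1 - 12 / (Real.exp 1) ^ 2) - 3 / 2) :
    memKe (fun z => -3 * (2 * (ν : ℂ) + 3) * (struveU ((ν : ℂ) + 3 / 2) 1 z - 1)) ∧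
    memSe (fun z => -3 * (2 * (ν : ℂ) + 3) * z * deriv (struveU ((ν : ℂ) + 3 / 2) 1) z) := by
  classical
  -- numeric setup
  set κ : ℝ := ν + 3/2 with hκdef
  have hκ : 12 ≤ κ := kappa_ge ν h
  have hcast : ((ν:ℂ) + 3/2) = ((κ:ℝ):ℂ) := by rw [hκdef]; push_cast; ring
  have hconst : (-3 : ℂ) * (2*(ν:ℂ)+3) = -6 * (κ:ℂ) := by rw [hκdef]; push_cast; ring
  have hU : struveU ((ν:ℂ)+3/2) 1 = psum (ca κ) := by
    funext z
    rw [hcast, struveU, psum]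
    exact tsum_congr fun n => by rw [ca]
  -- coefficient bounds
  have ha : ∀ n, ‖ca κ n‖ ≤ 1 * (1/48:ℝ)^n := ca_norm hκ
  have hb : ∀ n, ‖cb κ n‖ ≤ 72 * (1/48:ℝ)^n := cb_norm hκ
  have he : ∀ n, ‖ce κ n‖ ≤ 72 * (1/24:ℝ)^n := ce_norm hκ
  have hda : ∀ n, ‖dcoef (ca κ) n‖ ≤ (1/48) * (1/24:ℝ)^n := by
    intro n
    calc ‖dcoef (ca κ) n‖ ≤ (1*(1/48)) * (2*(1/48))^n := dcoef_bound (by norm_num) ha n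
      _ = (1/48) * (1/24:ℝ)^n := by norm_num
  have hdb : ∀ n, ‖dcoef (cb κ) n‖ ≤ (3/2) * (1/24:ℝ)^n := by
    intro n
    calc ‖dcoef (cb κ) n‖ ≤ (72*(1/48)) * (2*(1/48))^n := dcoef_bound (by norm_num) hb n
      _ = (3/2) * (1/24:ℝ)^n := by norm_num
  have hddb : ∀ n, ‖dcoef (dcoef (cb κ)) n‖ ≤ (1/16) * (1/12:ℝ)^n := by
    intro n
    calc ‖dcoef (dcoef (cb κ)) n‖ ≤ ((3/2)*(1/24)) * (2*(1/24))^n := dcoef_bound (by norm_num) hdb n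
      _ = (1/16) * (1/12:ℝ)^n := by norm_num
  have hde : ∀ n, ‖dcoef (ce κ) n‖ ≤ 3 * (1/12:ℝ)^n := by
    intro n
    calc ‖dcoef (ce κ) n‖ ≤ (72*(1/24)) * (2*(1/24))^n := dcoef_bound (by norm_num) he n
      _ = 3 * (1/12:ℝ)^n := by norm_num
  have hhc : ∀ n, ‖ce κ (n+1)‖ ≤ 3 * (1/24:ℝ)^n := by
    intro n
    calc ‖ce κ (n+1)‖ ≤ 72 * (1/24)^(n+1) := he _
      _ = 3 * (1/24:ℝ)^n := by rw [pow_succ]; ring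
  have hdhc : ∀ n, ‖dcoef (fun m => ce κ (m+1)) n‖ ≤ (1/8) * (1/12:ℝ)^n := by
    intro n
    calc ‖dcoef (fun m => ce κ (m+1)) n‖ ≤ (3*(1/24)) * (2*(1/24))^n := dcoef_bound (by norm_num) hhc n
      _ = (1/8) * (1/12:ℝ)^n := by norm_num
  -- special values
  have hcb0 : cb κ 0 = 0 := by simp [cb]
  have hce0 : ce κ 0 = 0 := by simp [ce]
  have hdb0 : dcoef (cb κ) 0 = 1 := by simp [dcoef, cb_one hκ]
  have hde0 : dcoef (ce κ) 0 = 1 := by simp [dcoef, ce, cb_one hκ]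
  have hhc0 : ce κ 1 = 1 := by simp [ce, cb_one hκ]
  have hball12 : ball (0:ℂ) 1 ⊆ ball 0 2 := ball_subset_ball (by norm_num)
  -- function equalities on ball 0 2
  set F : ℂ → ℂ := fun z => -3 * (2 * (ν : ℂ) + 3) * (struveU ((ν : ℂ) + 3 / 2) 1 z - 1) with hFdef
  set G : ℂ → ℂ := fun z => -3 * (2 * (ν : ℂ) + 3) * z * deriv (struveU ((ν : ℂ) + 3 / 2) 1) z with hGdef
  have hFeq : EqOn F (psum (cb κ)) (ball 0 2) := by
    intro z hz
    rw [mem_ball, dist_zero_right] at hz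
    have hsa : Summable fun n => ca κ n * z^n := summable_term (by norm_num) (by norm_num) ha hz
    have hsb : Summable fun n => cb κ n * z^n := summable_term (by norm_num) (by norm_num) hb hz
    show -3 * (2 * (ν : ℂ) + 3) * (struveU ((ν : ℂ) + 3 / 2) 1 z - 1) = psum (cb κ) z
    rw [hU, hconst]
    have h1 : (-6*(κ:ℂ)) * (psum (ca κ) z - 1) = ∑' n, (-6*(κ:ℂ)) * (ca κ (n+1) * z^(n+1)) := by
      rw [psum, Summable.tsum_eq_zero_add hsa, ca_zero, pow_zero, one_mul, add_sub_cancel_left,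
        tsum_mul_left]
    have h2 : psum (cb κ) z = ∑' n, (-6*(κ:ℂ)) * (ca κ (n+1) * z^(n+1)) := by
      rw [psum, Summable.tsum_eq_zero_add hsb, hcb0, zero_mul, zero_add]
      exact tsum_congr fun n => by rw [cb, if_neg (Nat.succ_ne_zero n)]; ring
    rw [h1, h2]
  have hGeq : EqOn G (psum (ce κ)) (ball 0 2) := by
    intro z hz
    have hz' : ‖z‖ < 2 := by rwa [mem_ball, dist_zero_right] at hz
    have hse : Summable fun n => ce κ n * z^n := summable_term (by norm_num) (by norm_num) he hz'
    show -3 * (2 * (ν : ℂ) + 3) * z * deriv (struveU ((ν : ℂ) + 3 / 2) 1) z = psum (ce κ) z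
    rw [hU, hconst, deriv_psum (by norm_num) (by norm_num) ha hz']
    simp only [psum]
    rw [Summable.tsum_eq_zero_add hse, hce0, zero_mul, zero_add, ← tsum_mul_left]
    exact tsum_congr fun n => by
      rw [dcoef, ce, cb, if_neg (Nat.succ_ne_zero n)]
      push_cast
      ring
  have hee : EqOn (psum (ce κ)) (fun z => z * psum (fun m => ce κ (m+1)) z) (ball 0 2) := by
    intro z hz
    have hz' : ‖z‖ < 2 := by rwa [mem_ball, dist_zero_right] at hz
    have hse : Summable fun n => ce κ n * z^n := summable_term (by norm_num) (by norm_num) he hz'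
    show psum (ce κ) z = z * psum (fun m => ce κ (m+1)) z
    simp only [psum]
    rw [Summable.tsum_eq_zero_add hse, hce0, zero_mul, zero_add, ← tsum_mul_left]
    exact tsum_congr fun n => by ring
  -- derivatives
  have hderivF : ∀ z ∈ ball (0:ℂ) 2, deriv F z = psum (dcoef (cb κ)) z := by
    intro z hz
    have hev : F =ᶠ[nhds z] psum (cb κ) :=
      Filter.eventuallyEq_of_mem (isOpen_ball.mem_nhds hz) hFeq
    rw [hev.deriv_eq]
    exact deriv_psum (by norm_num) (by norm_num) hb (by rwa [mem_ball, dist_zero_right] at hz)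
  have hderiv2F : ∀ z ∈ ball (0:ℂ) 2, deriv (deriv F) z = psum (dcoef (dcoef (cb κ))) z := by
    intro z hz
    have hev : deriv F =ᶠ[nhds z] psum (dcoef (cb κ)) :=
      Filter.eventuallyEq_of_mem (isOpen_ball.mem_nhds hz) (fun w hw => hderivF w hw)
    rw [hev.deriv_eq]
    exact deriv_psum (by norm_num) (by norm_num) hdb (by rwa [mem_ball, dist_zero_right] at hz)
  have hderivG : ∀ z ∈ ball (0:ℂ) 2, deriv G z =
      psum (fun m => ce κ (m+1)) z + z * psum (dcoef (fun m => ce κ (m+1))) z := by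
    intro z hz
    have hz' : ‖z‖ < 2 := by rwa [mem_ball, dist_zero_right] at hz
    have hev : G =ᶠ[nhds z] (fun w => w * psum (fun m => ce κ (m+1)) w) :=
      Filter.eventuallyEq_of_mem (isOpen_ball.mem_nhds hz) (fun w hw => (hGeq hw).trans (hee hw))
    rw [hev.deriv_eq]
    have hd : HasDerivAt (fun w => w * psum (fun m => ce κ (m+1)) w)
        (1 * psum (fun m => ce κ (m+1)) z + z * psum (dcoef (fun m => ce κ (m+1))) z) z :=
      (hasDerivAt_id z).mul (hasDerivAt_psum (by norm_num) (by norm_num) hhc hz')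
    rw [hd.deriv, one_mul]
  -- lower bounds for denominators
  have hGlb : ∀ z : ℂ, ‖z‖ ≤ 1 → 43/46 ≤ ‖psum (dcoef (cb κ)) z‖ := by
    intro z hz
    have h1 : ‖psum (dcoef (cb κ)) z - 1‖ ≤ 3/46 := by
      have h1' := psum_sub_head_norm_le (by norm_num) (by norm_num) hdb hz
      rw [hdb0] at h1'
      exact h1'.trans (by norm_num)
    have h2 : ‖(1:ℂ)‖ - ‖psum (dcoef (cb κ)) z‖ ≤ ‖(1:ℂ) - psum (dcoef (cb κ)) z‖ :=
      norm_sub_norm_le _ _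
    rw [norm_one, norm_sub_rev] at h2
    linarith
  have hhlb : ∀ z : ℂ, ‖z‖ ≤ 1 → 20/23 ≤ ‖psum (fun m => ce κ (m+1)) z‖ := by
    intro z hz
    have h1 : ‖psum (fun m => ce κ (m+1)) z - ce κ 1‖ ≤ 3/23 := by
      have h1' := psum_sub_head_norm_le (by norm_num) (by norm_num) hhc hz
      exact h1'.trans (by norm_num)
    rw [hhc0] at h1
    have h2 : ‖(1:ℂ)‖ - ‖psum (fun m => ce κ (m+1)) z‖ ≤
        ‖(1:ℂ) - psum (fun m => ce κ (m+1)) z‖ := norm_sub_norm_le _ _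
    rw [norm_one, norm_sub_rev] at h2
    linarith
  constructor
  · -- memKe F
    refine ⟨?_, ?_, ?_, ?_, ?_, ?_, ?_⟩
    · exact AnalyticOnNhd.congr isOpen_ball
        ((analyticOnNhd_psum (by norm_num) (by norm_num) hb).mono hball12)
        (fun z hz => (hFeq (hball12 hz)).symm)
    · show F 0 = 0
      rw [hFdef]
      show -3 * (2 * (ν : ℂ) + 3) * (struveU ((ν : ℂ) + 3 / 2) 1 0 - 1) = 0
      rw [hU, psum_zero, ca_zero]
      ring
    · rw [hderivF 0 (by simp), psum_zero, hdb0]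
    · intro z hz
      rw [hderivF z (hball12 hz)]
      intro hzero
      have := hGlb z (mem_ball_zero_iff.mp hz).le
      rw [hzero] at this
      norm_num at this
    · -- memPe analytic
      have hQ : AnalyticOnNhd ℂ
          (fun z => 1 + z * psum (dcoef (dcoef (cb κ))) z / psum (dcoef (cb κ)) z) (ball 0 1) := by
        apply AnalyticOnNhd.add analyticOnNhd_const
        apply AnalyticOnNhd.div
        · exact (analyticOnNhd_id).mul
            ((analyticOnNhd_psum (by norm_num) (by norm_num) hddb).mono hball12)
        · exact (analyticOnNhd_psum (by norm_num) (by norm_num) hdb).mono hball12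
        · intro z hz h0
          have := hGlb z (mem_ball_zero_iff.mp hz).le
          rw [h0] at this
          norm_num at this
      exact AnalyticOnNhd.congr isOpen_ball hQ
        (fun z hz => by rw [hderivF z (hball12 hz), hderiv2F z (hball12 hz)])
    · show 1 + (0:ℂ) * deriv (deriv F) 0 / deriv F 0 = 1
      simp
    · intro z hz
      have hz1 : ‖z‖ < 1 := mem_ball_zero_iff.mp hz
      apply mem_exp_ball
      show ‖1 + z * deriv (deriv F) z / deriv F z - 1‖ ≤ 1/5
      rw [hderivF z (hball12 hz), hderiv2F z (hball12 hz), add_sub_cancel_left, norm_div, norm_mul]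
      have hH : ‖psum (dcoef (dcoef (cb κ))) z‖ ≤ 3/44 :=
        (psum_norm_le (by norm_num) (by norm_num) hddb hz1.le).trans (by norm_num)
      have hG := hGlb z hz1.le
      have hGpos : (0:ℝ) < ‖psum (dcoef (cb κ)) z‖ := lt_of_lt_of_le (by norm_num) hG
      rw [div_le_iff₀ hGpos]
      nlinarith [norm_nonneg z, norm_nonneg (psum (dcoef (dcoef (cb κ))) z)]
  · -- memSe G
    have hqQ : ∀ z ∈ ball (0:ℂ) 1,
        (1 + z * psum (dcoef (fun m => ce κ (m+1))) z / psum (fun m => ce κ (m+1)) z)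
          = (if z = 0 then 1 else z * deriv G z / G z) := by
      intro z hz
      have hz2 : z ∈ ball (0:ℂ) 2 := hball12 hz
      by_cases hz0 : z = 0
      · rw [if_pos hz0, hz0]
        simp
      · rw [if_neg hz0, hderivG z hz2, (hGeq hz2).trans (hee hz2)]
        have hhne : psum (fun m => ce κ (m+1)) z ≠ 0 := by
          intro h0
          have := hhlb z (mem_ball_zero_iff.mp hz).le
          rw [h0] at this
          norm_num at this
        field_simp
    refine ⟨?_, ?_, ?_, ?_, ?_, ?_, ?_⟩
    · exact AnalyticOnNhd.congr isOpen_ball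
        ((analyticOnNhd_psum (by norm_num) (by norm_num) he).mono hball12)
        (fun z hz => (hGeq (hball12 hz)).symm)
    · show -3 * (2 * (ν : ℂ) + 3) * 0 * deriv (struveU ((ν : ℂ) + 3 / 2) 1) 0 = 0
      ring
    · have h0 : (0:ℂ) ∈ ball (0:ℂ) 2 := by simp
      have hev : G =ᶠ[nhds 0] psum (ce κ) :=
        Filter.eventuallyEq_of_mem (isOpen_ball.mem_nhds h0) hGeq
      rw [hev.deriv_eq, deriv_psum (by norm_num) (by norm_num) he (by norm_num), psum_zero, hde0]
    · intro z hz hz0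
      rw [(hGeq (hball12 hz)).trans (hee (hball12 hz))]
      apply mul_ne_zero hz0
      intro h0
      have := hhlb z (mem_ball_zero_iff.mp hz).le
      rw [h0] at this
      norm_num at this
    · have hQ : AnalyticOnNhd ℂ
          (fun z => 1 + z * psum (dcoef (fun m => ce κ (m+1))) z / psum (fun m => ce κ (m+1)) z)
          (ball 0 1) := by
        apply AnalyticOnNhd.add analyticOnNhd_const
        apply AnalyticOnNhd.div
        · exact (analyticOnNhd_id).mul
            ((analyticOnNhd_psum (by norm_num) (by norm_num) hdhc).mono hball12)
        · exact (analyticOnNhd_psum (by norm_num) (by norm_num) hhc).mono hball12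
        · intro z hz h0
          have := hhlb z (mem_ball_zero_iff.mp hz).le
          rw [h0] at this
          norm_num at this
      exact AnalyticOnNhd.congr isOpen_ball hQ (fun z hz => hqQ z hz)
    · show (if (0:ℂ) = 0 then (1:ℂ) else 0 * deriv G 0 / G 0) = 1
      rw [if_pos rfl]
    · intro z hz
      have hz1 : ‖z‖ < 1 := mem_ball_zero_iff.mp hz
      apply mem_exp_ball
      show ‖(if z = 0 then 1 else z * deriv G z / G z) - 1‖ ≤ 1/5
      rw [← hqQ z hz, add_sub_cancel_left, norm_div, norm_mul]
      have hH : ‖psum (dcoef (fun m => ce κ (m+1))) z‖ ≤ 3/22 :=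
        (psum_norm_le (by norm_num) (by norm_num) hdhc hz1.le).trans (by norm_num)
      have hG := hhlb z hz1.le
      have hGpos : (0:ℝ) < ‖psum (fun m => ce κ (m+1)) z‖ := lt_of_lt_of_le (by norm_num) hG
      rw [div_le_iff₀ hGpos]
      nlinarith [norm_nonneg z, norm_nonneg (psum (dcoef (fun m => ce κ (m+1))) z)]
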